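/- In a multiplicative lattice L, the product of any two z-elements is a z-element if and only if every basic z-element m_a = ⋀{m maximal : a ≤ m} is idempotent (i.e., (m_a)^2 = m_a for all a ∈ L). -/
import Mathlib


/-- A multiplicative lattice: a complete lattice with an associative, commutative
multiplication distributing over arbitrary joins, with the top element as unit. -/
class MultiplicativeLattice (L : Type*) extends CompleteLattice L, CommMonoid L where
  mul_sSup : ∀ (a : L) (s : Set L), a * sSup s = ⨆ b ∈ s, a * b
  one_eq_top : (1 : L) = ⊤

variable {L : Type*} [MultiplicativeLattice L]

/-- A maximal element: proper, and anything properly above it up to (but not) ⊤ equals it. -/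
def IsMaxElt (m : L) : Prop := m ≠ ⊤ ∧ ∀ x : L, m ≤ x → x ≠ ⊤ → m = x

/-- The set of maximal elements above `a`. -/
def MSet (a : L) : Set L := {m | IsMaxElt m ∧ a ≤ m}

/-- A z-element: `M_a ⊇ M_b` and `b ≤ x` imply `a ≤ x`. -/
def IsZ (x : L) : Prop := ∀ a b : L, MSet b ⊆ MSet a → b ≤ x → a ≤ x

/-- The top element 1 = ⊤ is compact. -/
def OneCompact (L : Type*) [MultiplicativeLattice L] : Prop :=
  ∀ s : Set L, sSup s = ⊤ → ∃ t : Finset L, ↑t ⊆ s ∧ t.sup id = ⊤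

/-- The z-closure of an element: meet of all z-elements above it. -/
noncomputable def zCl (a : L) : L := sInf {z : L | IsZ z ∧ a ≤ z}

lemma ML.mul_sup (a b c : L) : a * (b ⊔ c) = a * b ⊔ a * c := by
  have := MultiplicativeLattice.mul_sSup a {b, c}
  simpa [sSup_pair, iSup_or, iSup_sup_eq] using this

lemma ML.mul_mono_right (a : L) {b c : L} (h : b ≤ c) : a * b ≤ a * c := by
  have : a * c = a * b ⊔ a * c := by rw [← ML.mul_sup, sup_eq_right.mpr h]
  rw [this]; exact le_sup_left

lemma ML.mul_le_left (a b : L) : a * b ≤ a := by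
  have : a * b ≤ a * ⊤ := ML.mul_mono_right a le_top
  rwa [← MultiplicativeLattice.one_eq_top, mul_one] at this

lemma ML.mul_le_right (a b : L) : a * b ≤ b := by
  rw [mul_comm]; exact ML.mul_le_left b a

lemma ML.le_mInf (a : L) : a ≤ sInf (MSet a) :=
  le_sInf fun _ hm => hm.2

lemma ML.max_prime {m x y : L} (hm : IsMaxElt m) (h : x * y ≤ m) :
    x ≤ m ∨ y ≤ m := by
  by_contra hc
  push_neg at hc
  obtain ⟨hx, hy⟩ := hc
  have hmx : m ⊔ x = ⊤ := by
    by_contra hne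
    exact hx ((hm.2 _ le_sup_left hne) ▸ le_sup_right)
  have hmy : m ⊔ y = ⊤ := by
    by_contra hne
    exact hy ((hm.2 _ le_sup_left hne) ▸ le_sup_right)
  have htop : (⊤ : L) = (m ⊔ x) * (m ⊔ y) := by
    rw [hmx, hmy, ← MultiplicativeLattice.one_eq_top, mul_one]
  have hle : (m ⊔ x) * (m ⊔ y) ≤ m := by
    rw [ML.mul_sup, mul_comm (m ⊔ x) m, mul_comm (m ⊔ x) y, ML.mul_sup, ML.mul_sup]
    exact sup_le (sup_le (ML.mul_le_left m m) (ML.mul_le_left m x))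
      (sup_le (ML.mul_le_right y m) (by rwa [mul_comm y x]))
  exact hm.1 (top_le_iff.mp (htop ▸ hle))

lemma ML.MSet_mul (x y : L) : MSet (x * y) = MSet x ∪ MSet y := by
  ext m
  constructor
  · rintro ⟨hm, hle⟩
    rcases ML.max_prime hm hle with h | h
    · exact Or.inl ⟨hm, h⟩
    · exact Or.inr ⟨hm, h⟩
  · rintro (⟨hm, hle⟩ | ⟨hm, hle⟩)
    · exact ⟨hm, le_trans (ML.mul_le_left x y) hle⟩
    · exact ⟨hm, le_trans (ML.mul_le_right x y) hle⟩

lemma ML.isZ_iff (x : L) : IsZ x ↔ sInf (MSet x) ≤ x := by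
  constructor
  · intro hz
    refine hz (sInf (MSet x)) x ?_ le_rfl
    intro m hm
    exact ⟨hm.1, sInf_le hm⟩
  · intro hle a b hsub hbx
    refine le_trans (le_sInf fun m hm => ?_) hle
    exact (hsub ⟨hm.1, le_trans hbx hm.2⟩).2

lemma ML.mInf_mInf (a : L) : sInf (MSet (sInf (MSet a))) = sInf (MSet a) := by
  refine le_antisymm (sInf_le_sInf fun m hm => ⟨hm.1, sInf_le hm⟩) (ML.le_mInf _)

theorem stmt17 (h : OneCompact L) :
    (∀ a b : L, IsZ a → IsZ b → IsZ (a * b)) ↔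
      (∀ a : L, (sInf (MSet a)) ^ 2 = sInf (MSet a)) := by
  constructor
  · intro hz a
    set c := sInf (MSet a) with hc
    have hcz : IsZ c := (ML.isZ_iff c).mpr (le_of_eq (ML.mInf_mInf a))
    have hcc : IsZ (c * c) := hz c c hcz hcz
    have h1 : sInf (MSet (c * c)) ≤ c * c := (ML.isZ_iff _).mp hcc
    rw [ML.MSet_mul, Set.union_self, ML.mInf_mInf] at h1
    rw [sq]
    exact le_antisymm (ML.mul_le_left c c) h1
  · intro hid x y hx hy
    rw [ML.isZ_iff, ML.MSet_mul, sInf_union]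
    set c := sInf (MSet x) ⊓ sInf (MSet y) with hc
    have hceq : sInf (MSet c) = c := by
      refine le_antisymm ?_ (ML.le_mInf c)
      have hsub : MSet x ∪ MSet y ⊆ MSet c := by
        rintro m (hm | hm)
        · exact ⟨hm.1, le_trans inf_le_left (sInf_le hm)⟩
        · exact ⟨hm.1, le_trans inf_le_right (sInf_le hm)⟩
      have := sInf_le_sInf hsub
      rwa [sInf_union] at this
    have hsq : c * c = c := by
      have := hid c
      rwa [hceq, sq] at this
    calc c = c * c := hsq.symm
      _ ≤ x * y := by
        have hcx : c ≤ x := le_trans inf_le_left ((ML.isZ_iff x).mp hx)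
        have hcy : c ≤ y := le_trans inf_le_right ((ML.isZ_iff y).mp hy)
        calc c * c ≤ c * y := ML.mul_mono_right c hcy
          _ = y * c := mul_comm c y
          _ ≤ y * x := ML.mul_mono_right y hcx
          _ = x * y := mul_comm y x
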